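/- arXiv:2509.07384 — 2 statements merged into one kernel-verified Lean document; each statement's English description precedes it below -/
import Mathlib

section
/- For a scalar u_sat > 0 and scalar input u ∈ ℝ, the saturation σ(u) = sign(u)·min(u_sat, |u|) lies in the convex hull of {u, h} whenever |h| ≤ u_sat; that is, there exists ϱ ∈ [0,1] such that σ(u) = ϱ u + (1-ϱ) h, provided σ(u) lies between u and h. More precisely: if |h| ≤ u_sat, then σ(u) ∈ [min(u,h), max(u,h)]. -/
theorem stmt_4 (usat : ℝ) (husat : 0 < usat) (u h : ℝ) (hh : |h| ≤ usat) :
    min u h ≤ Real.sign u * min usat |u| ∧ Real.sign u * min usat |u| ≤ max u h := by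
  obtain ⟨hh1, hh2⟩ := abs_le.mp hh
  have hmu := min_le_left u h
  have hmh := min_le_right u h
  have hMu := le_max_left u h
  have hMh := le_max_right u h
  rcases lt_trichotomy u 0 with hu | hu | hu
  · rw [Real.sign_of_neg hu, abs_of_neg hu]
    rcases le_total usat (-u) with hc | hc
    · rw [min_eq_left hc]; constructor <;> linarith
    · rw [min_eq_right hc]; constructor <;> linarith
  · simp [hu]
  · rw [Real.sign_of_pos hu, abs_of_pos hu, one_mul]
    rcases le_total usat u with hc | hc
    · rw [min_eq_left hc]; constructor <;> linarith
    · rw [min_eq_right hc]; constructor <;> linarith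
end

section
/- One-step contraction implies exponential decay in the mean-square ISS sense: if ϱ₂ ξ_k ≤ V_k ≤ ϱ₃ ξ_k with 0 < ϱ₂ ≤ ϱ₃, ξ_k ≥ 0, and V_{k+1} - V_k ≤ -ϱ₁ ξ_k + c with 0 < ϱ₁ ≤ ϱ₃ and c ≥ 0, then ξ_k ≤ ψ₁(ξ_0, k) + ψ₂(c), where ψ₁(s,k) = (ϱ₃/ϱ₂)(1-ϱ₁/ϱ₃)^k s is of class 𝒦𝓛 (continuous, increasing to s in the first argument with ψ₁(0,k)=0, and decreasing to 0 in k for fixed s>0) and ψ₂(c) = c·ϱ₃/(ϱ₁ϱ₂) is of class 𝒦 (continuous, strictly increasing, ψ₂(0)=0). -/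
open Filter

/-- The class-𝒦𝓛 bounding function ψ₁(s,k) = (ϱ₃/ϱ₂)(1-ϱ₁/ϱ₃)^k s. -/
noncomputable def psi1 (r1 r2 r3 : ℝ) (s : ℝ) (k : ℕ) : ℝ :=
  (r3 / r2) * (1 - r1 / r3) ^ k * s

/-- The class-𝒦 bounding function ψ₂(c) = c·ϱ₃/(ϱ₁ϱ₂). -/
noncomputable def psi2 (r1 r2 r3 : ℝ) (c : ℝ) : ℝ :=
  c * r3 / (r1 * r2)

theorem stmt_19 (r1 r2 r3 c : ℝ) (hr1 : 0 < r1) (hr2 : 0 < r2) (hr3 : 0 < r3)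
    (hr13 : r1 ≤ r3) (hc : 0 ≤ c)
    (ξ V : ℕ → ℝ) (hξ : ∀ k, 0 ≤ ξ k)
    (hlow : ∀ k, r2 * ξ k ≤ V k) (hup : ∀ k, V k ≤ r3 * ξ k)
    (hdec : ∀ k, V (k + 1) ≤ V k - r1 * ξ k + c) :
    (∀ k, ξ k ≤ psi1 r1 r2 r3 (ξ 0) k + psi2 r1 r2 r3 c) ∧
    -- ψ₁ has the class-𝒦𝓛 properties:
    (∀ k, Continuous (fun s => psi1 r1 r2 r3 s k)) ∧
    (∀ k, psi1 r1 r2 r3 0 k = 0) ∧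
    (∀ k, Monotone (fun s => psi1 r1 r2 r3 s k)) ∧
    (∀ s : ℝ, 0 < s → Antitone (fun k => psi1 r1 r2 r3 s k)) ∧
    (∀ s : ℝ, 0 < s → Tendsto (fun k => psi1 r1 r2 r3 s k) atTop (nhds 0)) ∧
    -- ψ₂ has the class-𝒦 properties:
    Continuous (psi2 r1 r2 r3) ∧ StrictMono (psi2 r1 r2 r3) ∧ psi2 r1 r2 r3 0 = 0 := by
  set q : ℝ := 1 - r1 / r3 with hq
  have hq0 : 0 ≤ q := by
    have h : r1 / r3 ≤ 1 := (div_le_one hr3).2 hr13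
    simp only [hq]; linarith
  have hq1 : q < 1 := by
    have : 0 < r1 / r3 := div_pos hr1 hr3
    simp only [hq]; linarith
  have hV : ∀ k, V k ≤ q ^ k * V 0 + c * r3 / r1 := by
    intro k
    induction k with
    | zero => simp; positivity
    | succ k ih =>
      have h1 : r1 / r3 * V k ≤ r1 * ξ k := by
        rw [div_mul_eq_mul_div, div_le_iff₀ hr3]
        calc r1 * V k ≤ r1 * (r3 * ξ k) := by
              exact mul_le_mul_of_nonneg_left (hup k) hr1.le
          _ = r1 * ξ k * r3 := by ring
      have h2 : V (k + 1) ≤ q * V k + c := by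
        have := hdec k
        simp only [hq]; nlinarith
      have h3 : q * V k ≤ q * (q ^ k * V 0 + c * r3 / r1) :=
        mul_le_mul_of_nonneg_left ih hq0
      have hkey : q * (c * r3 / r1) + c = c * r3 / r1 := by
        rw [hq]; field_simp <;> ring
      calc V (k + 1) ≤ q * V k + c := h2
        _ ≤ q * (q ^ k * V 0 + c * r3 / r1) + c := by linarith
        _ = q ^ (k + 1) * V 0 + (q * (c * r3 / r1) + c) := by ring
        _ = q ^ (k + 1) * V 0 + c * r3 / r1 := by rw [hkey]
  refine ⟨?_, ?_, ?_, ?_, ?_, ?_, ?_, ?_, ?_⟩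
  · intro k
    have h1 : r2 * ξ k ≤ q ^ k * V 0 + c * r3 / r1 := (hlow k).trans (hV k)
    have h2 : q ^ k * V 0 ≤ q ^ k * (r3 * ξ 0) :=
      mul_le_mul_of_nonneg_left (hup 0) (pow_nonneg hq0 k)
    have : r2 * ξ k ≤ q ^ k * (r3 * ξ 0) + c * r3 / r1 := by linarith
    rw [psi1, psi2]
    rw [← hq]
    have hr2' : (0:ℝ) < r2 := hr2
    have hle : ξ k ≤ (q ^ k * (r3 * ξ 0) + c * r3 / r1) / r2 := by
      rw [le_div_iff₀ hr2']
      linarith [h1, h2]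
    calc ξ k ≤ (q ^ k * (r3 * ξ 0) + c * r3 / r1) / r2 := hle
      _ = r3 / r2 * q ^ k * ξ 0 + c * r3 / (r1 * r2) := by
          field_simp
  · intro k
    exact (continuous_const.mul continuous_id).congr (fun s => rfl)
  · intro k; simp [psi1]
  · intro k
    intro a b hab
    simp only [psi1]
    exact mul_le_mul_of_nonneg_left hab (by positivity)
  · intro s hs
    intro a b hab
    simp only [psi1]
    have : q ^ b ≤ q ^ a := pow_le_pow_of_le_one hq0 hq1.le hab
    have h3 : 0 ≤ r3 / r2 := by positivity
    rw [← hq]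
    nlinarith [hs.le, mul_le_mul_of_nonneg_left this h3]
  · intro s hs
    simp only [psi1, ← hq]
    have h := tendsto_pow_atTop_nhds_zero_of_lt_one hq0 hq1
    have := (h.const_mul (r3 / r2)).mul_const s
    simpa using this
  · exact (continuous_id.mul continuous_const).div_const _
  · intro a b hab
    simp only [psi2]
    rw [div_lt_div_iff₀ (by positivity) (by positivity)]
    nlinarith [mul_pos hr1 hr2, mul_pos hr3 (mul_pos hr1 hr2)]
  · simp [psi2]
end
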